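/- Let n ≥ 2 and θ(z) = zⁿ. For a holomorphic self-map φ of 𝔻, the model space Q_θ (the polynomials of degree ≤ n−1) reduces C_φ (i.e., both Q_θ and θH²(𝔻) are C_φ-invariant) if and only if φ(z) = cz for some scalar c with |c| ≤ 1. -/

import Mathlib

open Complex Metric Filter Set

noncomputable section

/-- A holomorphic self-map of the open unit disc. -/
def SelfMapD (φ : ℂ → ℂ) : Prop :=
  DifferentiableOn ℂ φ (Metric.ball (0:ℂ) 1) ∧
  Set.MapsTo φ (Metric.ball (0:ℂ) 1) (Metric.ball (0:ℂ) 1)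

/-- Membership in the Hardy space `H²(𝔻)`. -/
def MemHardy2 (f : ℂ → ℂ) : Prop :=
  DifferentiableOn ℂ f (Metric.ball (0:ℂ) 1) ∧
  ∃ M : ℝ, ∀ r : ℝ, 0 ≤ r → r < 1 →
    (∫ t in (0:ℝ)..(2 * Real.pi),
      ‖f ((r : ℂ) * Complex.exp (t * Complex.I))‖ ^ 2) ≤ M

/-- An inner function: a bounded-by-one holomorphic function on `𝔻` whose radial
boundary values have modulus one almost everywhere. -/
def InnerFunction (θ : ℂ → ℂ) : Prop :=
  DifferentiableOn ℂ θ (Metric.ball (0:ℂ) 1) ∧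
  (∀ z ∈ Metric.ball (0:ℂ) 1, ‖θ z‖ ≤ 1) ∧
  ∀ᵐ t : ℝ, Filter.Tendsto
    (fun r : ℝ => ‖θ ((r : ℂ) * Complex.exp (t * Complex.I))‖)
    (nhdsWithin 1 (Set.Iio 1)) (nhds 1)

/-- The `n`-th Taylor coefficient of `f` at the origin. -/
def hcoef (f : ℂ → ℂ) (n : ℕ) : ℂ := iteratedDeriv n f 0 / n.factorial

/-- The `H²` inner product, via Taylor coefficients. -/
def hInner (f g : ℂ → ℂ) : ℂ := ∑' n : ℕ, hcoef f n * (starRingEnd ℂ) (hcoef g n)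

/-- The square of the `H²` norm. -/
def hNorm2 (f : ℂ → ℂ) : ℝ := ∑' n : ℕ, ‖hcoef f n‖ ^ 2

/-- Membership in the model space `Q_θ = H² ⊖ θH²`. -/
def MemModel (θ f : ℂ → ℂ) : Prop :=
  MemHardy2 f ∧ ∀ g, MemHardy2 g → hInner f (fun z => θ z * g z) = 0

/-- The model space `Q_θ` is invariant under the composition operator `C_φ`. -/
def ModelInv (θ φ : ℂ → ℂ) : Prop :=
  ∀ f, MemModel θ f → MemModel θ (fun z => f (φ z))

/-- The Beurling subspace `θH²` is invariant under the composition operator `C_φ`. -/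
def BeurlingInv (θ φ : ℂ → ℂ) : Prop :=
  ∀ f, MemHardy2 f → ∃ g, MemHardy2 g ∧
    ∀ z ∈ Metric.ball (0:ℂ) 1, θ (φ z) * f (φ z) = θ z * g z

/-- A subspace of functions is invariant under `C_φ` (as functions on the disc). -/
def SpanInvOn (Q : Submodule ℂ (ℂ → ℂ)) (φ : ℂ → ℂ) : Prop :=
  ∀ f ∈ Q, ∃ g ∈ Q, ∀ z ∈ Metric.ball (0:ℂ) 1, f (φ z) = g z

/-- The (holomorphic extension of the) quotient `(θ∘σ)/θ` lies in `H²`. -/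
def QuotInH2 (θ σ : ℂ → ℂ) : Prop :=
  ∃ g, MemHardy2 g ∧ ∀ z ∈ Metric.ball (0:ℂ) 1, θ z ≠ 0 → g z = θ (σ z) / θ z

/-- The model space spanned by `z^t/(1-ᾱz)^{t+1}`, `0 ≤ t ≤ n-1`. -/
def Qball (α : ℂ) (n : ℕ) : Submodule ℂ (ℂ → ℂ) :=
  Submodule.span ℂ
    {f : ℂ → ℂ | ∃ t : ℕ, t < n ∧ f = fun z => z ^ t / (1 - (starRingEnd ℂ) α * z) ^ (t + 1)}

lemma ball_infinite : (Metric.ball (0:ℂ) 1).Infinite := by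
  apply Set.infinite_of_injective_forall_mem (f := fun k : ℕ => (((k:ℂ) + 2))⁻¹)
  · intro a b hab
    have h : ((a:ℂ) + 2) = (b:ℂ) + 2 := inv_injective hab
    have : (a:ℂ) = b := by linear_combination h
    exact_mod_cast this
  · intro k
    simp only [Metric.mem_ball, dist_zero_right, norm_inv]
    rw [inv_lt_one_iff₀]
    right
    calc (1:ℝ) < 2 := by norm_num
    _ ≤ ‖(k:ℂ) + 2‖ := by
        have : ((k:ℂ) + 2) = ((k + 2 : ℕ) : ℂ) := by push_cast; ring
        rw [this, Complex.norm_natCast]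
        exact_mod_cast Nat.le_add_left 2 k

lemma span_poly_repr {n : ℕ} {f : ℂ → ℂ} (hn : 0 < n)
    (hf : f ∈ Submodule.span ℂ {f : ℂ → ℂ | ∃ i : ℕ, i < n ∧ f = fun z => z ^ i}) :
    ∃ P : Polynomial ℂ, P.natDegree < n ∧ ∀ z, f z = P.eval z := by
  induction hf using Submodule.span_induction with
  | mem f hf =>
      obtain ⟨i, hi, rfl⟩ := hf
      exact ⟨Polynomial.X ^ i, by simpa using hi, fun z => by simp⟩
  | zero => exact ⟨0, by simpa using hn, fun z => by simp⟩
  | add f g _ _ hf hg =>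
      obtain ⟨P, hP, hPe⟩ := hf; obtain ⟨Q, hQ, hQe⟩ := hg
      refine ⟨P + Q, lt_of_le_of_lt (Polynomial.natDegree_add_le P Q) (by omega), fun z => by
        simp [hPe z, hQe z]⟩
  | smul a f _ hf =>
      obtain ⟨P, hP, hPe⟩ := hf
      refine ⟨Polynomial.C a * P, ?_, fun z => by simp [hPe z]⟩
      exact lt_of_le_of_lt (Polynomial.natDegree_C_mul_le a P) hP

lemma span_comp_smul {n : ℕ} (c : ℂ) {f : ℂ → ℂ}
    (hf : f ∈ Submodule.span ℂ {f : ℂ → ℂ | ∃ i : ℕ, i < n ∧ f = fun z => z ^ i}) :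
    (fun z => f (c * z)) ∈
      Submodule.span ℂ {f : ℂ → ℂ | ∃ i : ℕ, i < n ∧ f = fun z => z ^ i} := by
  induction hf using Submodule.span_induction with
  | mem f hf =>
      obtain ⟨i, hi, rfl⟩ := hf
      have : (fun z : ℂ => (c * z) ^ i) = (c ^ i) • (fun z : ℂ => z ^ i) := by
        funext z; simp [mul_pow]
      rw [this]
      exact Submodule.smul_mem _ _ (Submodule.subset_span ⟨i, hi, rfl⟩)
  | zero => exact Submodule.zero_mem _
  | add f g _ _ hf hg =>
      have : (fun z => (f + g) (c * z)) = (fun z => f (c * z)) + (fun z => g (c * z)) := rfl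
      rw [this]; exact Submodule.add_mem _ hf hg
  | smul a f _ hf =>
      have : (fun z => (a • f) (c * z)) = a • (fun z => f (c * z)) := rfl
      rw [this]; exact Submodule.smul_mem _ _ hf

lemma hardy_scale {f : ℂ → ℂ} (hf : MemHardy2 f) (a c : ℂ) (hc : ‖c‖ ≤ 1) :
    MemHardy2 (fun z => a * f (c * z)) := by
  obtain ⟨hd, M, hM⟩ := hf
  have hmaps : Set.MapsTo (fun z : ℂ => c * z) (Metric.ball 0 1) (Metric.ball 0 1) := by
    intro z hz
    simp only [Metric.mem_ball, dist_zero_right] at hz ⊢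
    calc ‖c * z‖ = ‖c‖ * ‖z‖ := by simp
    _ ≤ 1 * ‖z‖ := by gcongr
    _ < 1 := by simpa using hz
  constructor
  · exact ((hd.comp (((differentiable_const c).mul differentiable_id).differentiableOn)
      hmaps).const_mul a)
  · refine ⟨‖a‖ ^ 2 * max M 0, fun r hr0 hr1 => ?_⟩
    set s : ℝ := ‖c‖ * r with hs
    have hs0 : 0 ≤ s := mul_nonneg (norm_nonneg c) hr0
    have hs1 : s < 1 := by
      calc s ≤ 1 * r := by rw [hs]; gcongr
      _ < 1 := by simpa using hr1
    set h : ℝ → ℝ := fun t => ‖f ((s : ℂ) * Complex.exp (t * Complex.I))‖ ^ 2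
      with hh
    have hper : Function.Periodic h (2 * Real.pi) := by
      intro t
      have : Complex.exp ((↑(t + 2 * Real.pi) : ℂ) * Complex.I)
          = Complex.exp ((t : ℂ) * Complex.I) := by
        push_cast
        rw [add_mul, Complex.exp_add, Complex.exp_two_pi_mul_I, mul_one]
      simp only [hh, this]
    have key : ∀ t : ℝ, c * ((r : ℂ) * Complex.exp ((t:ℂ) * Complex.I))
        = (s : ℂ) * Complex.exp ((↑(t + c.arg) : ℂ) * Complex.I) := by
      intro t
      have hc2 : c = (‖c‖ : ℂ) * Complex.exp ((c.arg : ℂ) * Complex.I) :=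
        (Complex.norm_mul_exp_arg_mul_I c).symm
      conv_lhs => rw [hc2]
      rw [hs]
      push_cast
      rw [add_mul, Complex.exp_add]
      ring
    calc (∫ t in (0:ℝ)..(2 * Real.pi),
          ‖a * f (c * ((r : ℂ) * Complex.exp ((t:ℂ) * Complex.I)))‖ ^ 2)
        = ∫ t in (0:ℝ)..(2 * Real.pi), ‖a‖ ^ 2 * h (t + c.arg) := by
          apply intervalIntegral.integral_congr
          intro t _
          show ‖a * f (c * ((r:ℂ) * Complex.exp ((t:ℂ) * Complex.I)))‖ ^ 2
            = ‖a‖ ^ 2 * h (t + c.arg)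
          rw [key t, norm_mul, mul_pow]
      _ = ‖a‖ ^ 2 * ∫ t in (0:ℝ)..(2 * Real.pi), h (t + c.arg) :=
          intervalIntegral.integral_const_mul _ _
      _ ≤ ‖a‖ ^ 2 * max M 0 := by
          apply mul_le_mul_of_nonneg_left _ (by positivity)
          have h1 : (∫ t in (0:ℝ)..(2 * Real.pi), h (t + c.arg))
              = ∫ t in (0 + c.arg)..(2 * Real.pi + c.arg), h t :=
            intervalIntegral.integral_comp_add_right _ _
          have h2 : (∫ t in (c.arg)..(c.arg + 2 * Real.pi), h t)
              = ∫ t in (0:ℝ)..(0 + 2 * Real.pi), h t :=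
            hper.intervalIntegral_add_eq c.arg 0
          rw [h1, zero_add, add_comm (2 * Real.pi) c.arg, h2, zero_add]
          exact le_max_of_le_left (hM s hs0 hs1)

lemma hardy_one : MemHardy2 (fun _ : ℂ => (1:ℂ)) := by
  refine ⟨differentiableOn_const 1, 2 * Real.pi, fun r hr0 hr1 => ?_⟩
  simp [Real.pi_nonneg]
/-- for `θ(z) = zⁿ`, `n ≥ 2`, the model space `Q_{zⁿ}` reduces `C_φ` iff
`φ(z) = cz` with `|c| ≤ 1`. -/
theorem monomial_model_space_reduces_iff
    (n : ℕ) (hn : 2 ≤ n) (φ : ℂ → ℂ) (hφ : SelfMapD φ) :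
    (SpanInvOn (Submodule.span ℂ {f : ℂ → ℂ | ∃ i : ℕ, i < n ∧ f = fun z => z ^ i}) φ ∧
      BeurlingInv (fun z => z ^ n) φ) ↔
      ∃ c : ℂ, ‖c‖ ≤ 1 ∧ ∀ z ∈ Metric.ball (0:ℂ) 1, φ z = c * z := by
  constructor
  · rintro ⟨hspan, hbeur⟩
    have hmem1 : (fun z : ℂ => z ^ 1) ∈
        Submodule.span ℂ {f : ℂ → ℂ | ∃ i : ℕ, i < n ∧ f = fun z => z ^ i} :=
      Submodule.subset_span ⟨1, by omega, rfl⟩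
    obtain ⟨g1, hg1mem, hg1⟩ := hspan _ hmem1
    obtain ⟨P, hPdeg, hPe⟩ := span_poly_repr (by omega) hg1mem
    have hφP : ∀ z ∈ Metric.ball (0:ℂ) 1, φ z = P.eval z := by
      intro z hz
      have h := (hg1 z hz).trans (hPe z)
      simpa using h
    have hmem2 : (fun z : ℂ => z ^ (n - 1)) ∈
        Submodule.span ℂ {f : ℂ → ℂ | ∃ i : ℕ, i < n ∧ f = fun z => z ^ i} :=
      Submodule.subset_span ⟨n - 1, by omega, rfl⟩
    obtain ⟨g2, hg2mem, hg2⟩ := hspan _ hmem2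
    obtain ⟨Q, hQdeg, hQe⟩ := span_poly_repr (by omega) hg2mem
    have hPQ : P ^ (n - 1) = Q := by
      apply Polynomial.eq_of_infinite_eval_eq
      apply Set.Infinite.mono _ ball_infinite
      intro z hz
      have h1 := (hg2 z hz).trans (hQe z)
      simp only [Set.mem_setOf_eq, Polynomial.eval_pow]
      rw [← hφP z hz]
      simpa using h1
    have hdegP : P.natDegree ≤ 1 := by
      have h3 : (n - 1) * P.natDegree < n := by
        rw [← Polynomial.natDegree_pow, hPQ]; exact hQdeg
      by_contra hcon
      push_neg at hcon
      have h4 : (n - 1) * 2 ≤ (n - 1) * P.natDegree := Nat.mul_le_mul_left (n - 1) hcon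
      have h5 := lt_of_le_of_lt h4 h3
      omega
    obtain ⟨g0, hg0H, hg0⟩ := hbeur _ hardy_one
    have hn0 : n ≠ 0 := by omega
    have h00 : φ 0 = 0 := by
      have h := hg0 0 (Metric.mem_ball_self one_pos)
      simp only [zero_pow hn0, mul_one, zero_mul] at h
      exact (pow_eq_zero_iff hn0).mp h
    have hc0 : P.coeff 0 = 0 := by
      rw [Polynomial.coeff_zero_eq_eval_zero, ← hφP 0 (Metric.mem_ball_self one_pos), h00]
    have hPX : P = Polynomial.C (P.coeff 1) * Polynomial.X + Polynomial.C (P.coeff 0) :=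
      Polynomial.eq_X_add_C_of_natDegree_le_one hdegP
    have hlin : ∀ z ∈ Metric.ball (0:ℂ) 1, φ z = P.coeff 1 * z := by
      intro z hz
      rw [hφP z hz]
      conv_lhs => rw [hPX]
      simp [hc0]
    refine ⟨P.coeff 1, ?_, hlin⟩
    by_contra habs
    push_neg at habs
    set C := ‖P.coeff 1‖ with hC
    have hCpos : 0 < C := lt_trans one_pos habs
    set t : ℝ := (1 + C⁻¹) / 2 with ht
    have hti : C⁻¹ < 1 := inv_lt_one_of_one_lt₀ habs
    have ht0 : 0 < t := by positivity
    have ht1 : t < 1 := by rw [ht]; linarith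
    have htc : C⁻¹ < t := by rw [ht]; linarith
    have hz : (t : ℂ) ∈ Metric.ball (0:ℂ) 1 := by
      simp only [Metric.mem_ball, dist_zero_right, Complex.norm_real, Real.norm_eq_abs]
      rw [abs_of_pos ht0]; exact ht1
    have hφz := hφ.2 hz
    rw [hlin _ hz] at hφz
    simp only [Metric.mem_ball, dist_zero_right, norm_mul, Complex.norm_real,
      Real.norm_eq_abs] at hφz
    rw [abs_of_pos ht0] at hφz
    have : (1:ℝ) < C * t := by
      calc (1:ℝ) = C * C⁻¹ := by field_simp
      _ < C * t := by exact mul_lt_mul_of_pos_left htc hCpos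
    linarith
  · rintro ⟨c, hc, hφc⟩
    constructor
    · intro f hfmem
      exact ⟨fun z => f (c * z), span_comp_smul c hfmem, fun z hz => by rw [hφc z hz]⟩
    · intro f hfH
      refine ⟨fun z => c ^ n * f (c * z), hardy_scale hfH (c ^ n) c hc, fun z hz => ?_⟩
      simp only
      rw [hφc z hz, mul_pow]
      ring
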